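/- One-dimensional regularized Prékopa--Leindler minimization: let $c_1,c_2\in(0,1)$ with $c_1+c_2<1$ and $\sigma_1,\sigma_2>0$, and define $\Phi(a_1,a_2)=a_1^{c_1}a_2^{c_2}\big(\frac{c_1}{a_1}+\frac{c_2}{a_2}\big)$ for $a_1,a_2>0$. Then $\inf\{\Phi(a_1,a_2): 0<a_1\le\sigma_1^{-1},\ 0<a_2\le\sigma_2^{-1}\}=\Phi(\sigma_1^{-1},\sigma_2^{-1})$ if and only if $c_1\sigma_1+c_2\sigma_2\le\min\{\sigma_1,\sigma_2\}$. -/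

import Mathlib

open Real Set

-- strict two-point AM-GM
lemma amgm2_strict {w1 w2 x y : ℝ} (hw1 : 0 < w1) (hw2 : 0 < w2) (hw : w1 + w2 = 1)
    (hx : 0 < x) (hy : 0 < y) (hxy : x ≠ y) : x ^ w1 * y ^ w2 < w1 * x + w2 * y := by
  have h := strictConcaveOn_log_Ioi.2 (mem_Ioi.2 hx) (mem_Ioi.2 hy) hxy hw1 hw2 hw
  have hpos : 0 < w1 * x + w2 * y := by positivity
  calc x ^ w1 * y ^ w2 = Real.exp (w1 * Real.log x + w2 * Real.log y) := by
        rw [Real.rpow_def_of_pos hx, Real.rpow_def_of_pos hy, ← Real.exp_add]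
        congr 1; ring
    _ < Real.exp (Real.log (w1 * x + w2 * y)) := by
        apply Real.exp_lt_exp.2; simpa [smul_eq_mul] using h
    _ = w1 * x + w2 * y := Real.exp_log hpos

-- one-variable: the function A a^p + B a^(p-1) is strictly smaller at its critical point than at any b beyond it
lemma onevar {A B p astar b : ℝ} (hA : 0 < A) (hB : 0 < B) (hp : 0 < p) (hp1 : p < 1)
    (hstar : p * A * astar = (1 - p) * B) (hb : astar < b) :
    A * astar ^ p + B * astar ^ (p - 1) < A * b ^ p + B * b ^ (p - 1) := by
  have hp1' : 0 < 1 - p := by linarith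
  have has : 0 < astar := by nlinarith [mul_pos hp hA, mul_pos hp1' hB]
  have hbpos : 0 < b := has.trans hb
  -- the constant C
  set C : ℝ := (A / (1 - p)) ^ (1 - p) * (B / p) ^ p with hC
  have claim : ∀ a : ℝ, 0 < a →
      (A * a ^ p / (1 - p)) ^ (1 - p) * (B * a ^ (p - 1) / p) ^ p = C := by
    intro a ha
    have h1 : A * a ^ p / (1 - p) = (A / (1 - p)) * a ^ p := by ring
    have h2 : B * a ^ (p - 1) / p = (B / p) * a ^ (p - 1) := by ring
    rw [h1, h2, Real.mul_rpow (by positivity) (by positivity),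
      Real.mul_rpow (by positivity) (by positivity),
      ← Real.rpow_mul ha.le, ← Real.rpow_mul ha.le]
    have : (A / (1 - p)) ^ (1 - p) * a ^ (p * (1 - p)) * ((B / p) ^ p * a ^ ((p - 1) * p))
        = C * (a ^ (p * (1 - p)) * a ^ ((p - 1) * p)) := by rw [hC]; ring
    rw [this, ← Real.rpow_add ha]
    have hz : p * (1 - p) + (p - 1) * p = 0 := by ring
    rw [hz, Real.rpow_zero, mul_one]
  -- value at astar equals C
  have hxs : A * astar ^ p / (1 - p) = B * astar ^ (p - 1) / p := by
    rw [Real.rpow_sub has, Real.rpow_one]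
    field_simp
    nlinarith [Real.rpow_pos_of_pos has p]
  have hxpos : 0 < A * astar ^ p / (1 - p) := by positivity
  have hvs : A * astar ^ p + B * astar ^ (p - 1) = C := by
    have e1 := claim astar has
    rw [← hxs] at e1
    rw [← Real.rpow_add hxpos] at e1
    norm_num at e1
    have : A * astar ^ p + B * astar ^ (p - 1)
        = (1 - p) * (A * astar ^ p / (1 - p)) + p * (B * astar ^ (p - 1) / p) := by
      field_simp
    rw [this, ← hxs]
    rw [← e1]; ring
  -- value at b is strictly bigger than C
  have hXY : A * b ^ p / (1 - p) ≠ B * b ^ (p - 1) / p := by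
    intro hEq
    have hbp : 0 < b ^ p := Real.rpow_pos_of_pos hbpos p
    rw [Real.rpow_sub hbpos, Real.rpow_one] at hEq
    have : p * A * b = (1 - p) * B := by
      field_simp at hEq
      nlinarith
    nlinarith [mul_pos (mul_pos hp hA) (sub_pos.2 hb)]
  have hlt := amgm2_strict hp1' hp (by ring) (by positivity) (by positivity) hXY
  rw [claim b hbpos] at hlt
  have : (1 - p) * (A * b ^ p / (1 - p)) + p * (B * b ^ (p - 1) / p)
      = A * b ^ p + B * b ^ (p - 1) := by field_simp
  rw [this] at hlt
  linarith [hvs ▸ hlt]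

lemma geo_split {t u l m c1 c2 : ℝ} (ht : 0 < t) (hu : 0 < u) (hlm : l + m = 1) :
    (t ^ (c1 - 1) * u ^ c2) ^ l * (t ^ c1 * u ^ (c2 - 1)) ^ m = t ^ (c1 - l) * u ^ (c2 - m) := by
  rw [Real.mul_rpow (by positivity) (by positivity),
    Real.mul_rpow (by positivity) (by positivity),
    ← Real.rpow_mul ht.le, ← Real.rpow_mul hu.le,
    ← Real.rpow_mul ht.le, ← Real.rpow_mul hu.le]
  have h : t ^ ((c1 - 1) * l) * u ^ (c2 * l) * (t ^ (c1 * m) * u ^ ((c2 - 1) * m))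
      = (t ^ ((c1 - 1) * l) * t ^ (c1 * m)) * (u ^ (c2 * l) * u ^ ((c2 - 1) * m)) := by ring
  rw [h, ← Real.rpow_add ht, ← Real.rpow_add hu]
  congr 1 <;> congr 1
  · linear_combination c1 * hlm
  · linear_combination c2 * hlm

lemma lowerbound {c1 c2 σ1 σ2 a1 a2 : ℝ} (hc1 : 0 < c1) (hc2 : 0 < c2)
    (hσ1 : 0 < σ1) (hσ2 : 0 < σ2)
    (h1 : c1 * σ1 + c2 * σ2 ≤ σ1) (h2 : c1 * σ1 + c2 * σ2 ≤ σ2)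
    (ha1 : 0 < a1) (ha1' : a1 ≤ σ1⁻¹) (ha2 : 0 < a2) (ha2' : a2 ≤ σ2⁻¹) :
    σ1⁻¹ ^ c1 * σ2⁻¹ ^ c2 * (c1 / σ1⁻¹ + c2 / σ2⁻¹) ≤ a1 ^ c1 * a2 ^ c2 * (c1 / a1 + c2 / a2) := by
  set t : ℝ := a1 * σ1 with htd
  set u : ℝ := a2 * σ2 with hud
  set D : ℝ := c1 * σ1 + c2 * σ2 with hDd
  have hD : 0 < D := by positivity
  set l : ℝ := c1 * σ1 / D with hld
  set m : ℝ := c2 * σ2 / D with hmd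
  have hl : 0 < l := by positivity
  have hm : 0 < m := by positivity
  have hlm : l + m = 1 := by rw [hld, hmd]; field_simp; exact hDd.symm
  have ht : 0 < t := by positivity
  have hu : 0 < u := by positivity
  have ht1 : t ≤ 1 := by
    have := mul_le_mul_of_nonneg_right ha1' hσ1.le
    rwa [inv_mul_cancel₀ hσ1.ne'] at this
  have hu1 : u ≤ 1 := by
    have := mul_le_mul_of_nonneg_right ha2' hσ2.le
    rwa [inv_mul_cancel₀ hσ2.ne'] at this
  have hc1l : c1 ≤ l := by
    rw [hld, le_div_iff₀ hD]
    nlinarith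
  have hc2m : c2 ≤ m := by
    rw [hmd, le_div_iff₀ hD]
    nlinarith
  -- 1 ≤ t^(c1-l) * u^(c2-m)
  have step1 : (1:ℝ) ≤ t ^ (c1 - l) * u ^ (c2 - m) := by
    have e1 : (1:ℝ) ≤ t ^ (c1 - l) :=
      Real.one_le_rpow_of_pos_of_le_one_of_nonpos ht ht1 (by linarith)
    have e2 : (1:ℝ) ≤ u ^ (c2 - m) :=
      Real.one_le_rpow_of_pos_of_le_one_of_nonpos hu hu1 (by linarith)
    nlinarith
  -- identify with geometric mean
  have step2 : t ^ (c1 - l) * u ^ (c2 - m)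
      = (t ^ (c1 - 1) * u ^ c2) ^ l * (t ^ c1 * u ^ (c2 - 1)) ^ m :=
    (geo_split ht hu hlm).symm
  have step3 : (t ^ (c1 - 1) * u ^ c2) ^ l * (t ^ c1 * u ^ (c2 - 1)) ^ m
      ≤ l * (t ^ (c1 - 1) * u ^ c2) + m * (t ^ c1 * u ^ (c2 - 1)) :=
    Real.geom_mean_le_arith_mean2_weighted hl.le hm.le (by positivity) (by positivity) hlm
  have key : (1:ℝ) ≤ l * (t ^ (c1 - 1) * u ^ c2) + m * (t ^ c1 * u ^ (c2 - 1)) := by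
    calc (1:ℝ) ≤ t ^ (c1 - l) * u ^ (c2 - m) := step1
      _ = _ := step2
      _ ≤ _ := step3
  -- identify both sides
  set E : ℝ := σ1⁻¹ ^ c1 * σ2⁻¹ ^ c2 * D with hEd
  have hE : 0 < E := by positivity
  have corner : σ1⁻¹ ^ c1 * σ2⁻¹ ^ c2 * (c1 / σ1⁻¹ + c2 / σ2⁻¹) = E := by
    have hq : c1 / σ1⁻¹ + c2 / σ2⁻¹ = c1 * σ1 + c2 * σ2 := by
      field_simp
    rw [hEd, hq, hDd]
  have expand : a1 ^ c1 * a2 ^ c2 * (c1 / a1 + c2 / a2)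
      = E * (l * (t ^ (c1 - 1) * u ^ c2) + m * (t ^ c1 * u ^ (c2 - 1))) := by
    rw [hEd, hld, hmd, htd, hud]
    rw [Real.rpow_sub (by positivity), Real.rpow_sub (by positivity), Real.rpow_one,
      Real.rpow_one]
    simp only [Real.mul_rpow ha1.le hσ1.le, Real.mul_rpow ha2.le hσ2.le,
      Real.inv_rpow hσ1.le, Real.inv_rpow hσ2.le]
    have n1 : σ1 ^ c1 ≠ 0 := (Real.rpow_pos_of_pos hσ1 c1).ne'
    have n2 : σ2 ^ c2 ≠ 0 := (Real.rpow_pos_of_pos hσ2 c2).ne'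
    field_simp
  rw [corner, expand]
  exact le_mul_of_one_le_right hE.le key

lemma witness {c1 c2 σ1 σ2 : ℝ} (hc1 : 0 < c1) (hc2a : 0 < c2) (hc2b : c2 < 1)
    (hσ1 : 0 < σ1) (hσ2 : 0 < σ2) (h : σ2 < c1 * σ1 + c2 * σ2) :
    ∃ a1 a2 : ℝ, 0 < a1 ∧ a1 ≤ σ1⁻¹ ∧ 0 < a2 ∧ a2 ≤ σ2⁻¹ ∧
      a1 ^ c1 * a2 ^ c2 * (c1 / a1 + c2 / a2)
        < σ1⁻¹ ^ c1 * σ2⁻¹ ^ c2 * (c1 / σ1⁻¹ + c2 / σ2⁻¹) := by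
  have hc2' : 0 < 1 - c2 := by linarith
  have hkey : (1 - c2) * σ2 < c1 * σ1 := by linarith
  set s1 : ℝ := σ1⁻¹ with hs1
  have hs1p : 0 < s1 := by positivity
  set A : ℝ := c1 * σ1 * s1 ^ c1 with hA
  set B : ℝ := c2 * s1 ^ c1 with hB
  have hAp : 0 < A := by positivity
  have hBp : 0 < B := by positivity
  set astar : ℝ := (1 - c2) * s1 / c1 with hastar
  have hasp : 0 < astar := by positivity
  have hstar : c2 * A * astar = (1 - c2) * B := by
    rw [hA, hB, hastar, hs1]; field_simp
  have hlt : astar < σ2⁻¹ := by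
    have e1 : astar * (c1 * σ1 * σ2) = (1 - c2) * σ2 := by
      rw [hastar, hs1]; field_simp
    have e2 : σ2⁻¹ * (c1 * σ1 * σ2) = c1 * σ1 := by field_simp
    nlinarith [mul_pos hc1 (mul_pos hσ1 hσ2)]
  have conv : ∀ a : ℝ, 0 < a →
      s1 ^ c1 * a ^ c2 * (c1 / s1 + c2 / a) = A * a ^ c2 + B * a ^ (c2 - 1) := by
    intro a ha
    rw [Real.rpow_sub ha, Real.rpow_one, hA, hB, hs1]
    have n1 : (σ1⁻¹ : ℝ) ^ c1 ≠ 0 := (Real.rpow_pos_of_pos (by positivity) c1).ne'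
    field_simp
  have honevar := onevar hAp hBp hc2a hc2b hstar hlt
  refine ⟨s1, astar, hs1p, le_refl _, hasp, hlt.le, ?_⟩
  rw [conv astar hasp, conv σ2⁻¹ (by positivity)]
  exact honevar

/-- One-dimensional regularized Prékopa–Leindler minimization. -/
theorem stmt15 (c1 c2 σ1 σ2 : ℝ) (hc1 : c1 ∈ Set.Ioo (0:ℝ) 1) (hc2 : c2 ∈ Set.Ioo (0:ℝ) 1)
    (hsum : c1 + c2 < 1) (hσ1 : 0 < σ1) (hσ2 : 0 < σ2) :
    sInf {y : ℝ | ∃ a1 a2 : ℝ, 0 < a1 ∧ a1 ≤ σ1⁻¹ ∧ 0 < a2 ∧ a2 ≤ σ2⁻¹ ∧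
        y = a1 ^ c1 * a2 ^ c2 * (c1 / a1 + c2 / a2)}
      = σ1⁻¹ ^ c1 * σ2⁻¹ ^ c2 * (c1 / σ1⁻¹ + c2 / σ2⁻¹)
    ↔ c1 * σ1 + c2 * σ2 ≤ min σ1 σ2 := by
  obtain ⟨hc1a, hc1b⟩ := hc1
  obtain ⟨hc2a, hc2b⟩ := hc2
  set S : Set ℝ := {y : ℝ | ∃ a1 a2 : ℝ, 0 < a1 ∧ a1 ≤ σ1⁻¹ ∧ 0 < a2 ∧ a2 ≤ σ2⁻¹ ∧
    y = a1 ^ c1 * a2 ^ c2 * (c1 / a1 + c2 / a2)} with hSd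
  have hmem : σ1⁻¹ ^ c1 * σ2⁻¹ ^ c2 * (c1 / σ1⁻¹ + c2 / σ2⁻¹) ∈ S :=
    ⟨σ1⁻¹, σ2⁻¹, by positivity, le_refl _, by positivity, le_refl _, rfl⟩
  have hbdd : BddBelow S := by
    refine ⟨0, fun y hy => ?_⟩
    obtain ⟨a1, a2, h1, h2, h3, h4, h5⟩ := hy
    rw [h5]
    apply le_of_lt
    exact mul_pos (mul_pos (Real.rpow_pos_of_pos h1 c1) (Real.rpow_pos_of_pos h3 c2))
      (add_pos (div_pos hc1a h1) (div_pos hc2a h3))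
  constructor
  · intro hinf
    by_contra hmin
    push_neg at hmin
    rw [min_lt_iff] at hmin
    obtain ⟨a1, a2, h1, h2, h3, h4, h5⟩ :
        ∃ a1 a2 : ℝ, 0 < a1 ∧ a1 ≤ σ1⁻¹ ∧ 0 < a2 ∧ a2 ≤ σ2⁻¹ ∧
          a1 ^ c1 * a2 ^ c2 * (c1 / a1 + c2 / a2)
            < σ1⁻¹ ^ c1 * σ2⁻¹ ^ c2 * (c1 / σ1⁻¹ + c2 / σ2⁻¹) := by
      rcases hmin with hm | hm
      · obtain ⟨b1, b2, g1, g2, g3, g4, g5⟩ := witness hc2a hc1a hc1b hσ2 hσ1 (by linarith)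
        refine ⟨b2, b1, g3, g4, g1, g2, ?_⟩
        calc b2 ^ c1 * b1 ^ c2 * (c1 / b2 + c2 / b1)
            = b1 ^ c2 * b2 ^ c1 * (c2 / b1 + c1 / b2) := by ring
          _ < σ2⁻¹ ^ c2 * σ1⁻¹ ^ c1 * (c2 / σ2⁻¹ + c1 / σ1⁻¹) := g5
          _ = σ1⁻¹ ^ c1 * σ2⁻¹ ^ c2 * (c1 / σ1⁻¹ + c2 / σ2⁻¹) := by ring
      · exact witness hc1a hc2a hc2b hσ1 hσ2 (by linarith)
    have hS : a1 ^ c1 * a2 ^ c2 * (c1 / a1 + c2 / a2) ∈ S := ⟨a1, a2, h1, h2, h3, h4, rfl⟩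
    have hle := csInf_le hbdd hS
    rw [hinf] at hle
    linarith
  · intro h
    refine le_antisymm (csInf_le hbdd hmem) (le_csInf ⟨_, hmem⟩ ?_)
    rintro y ⟨a1, a2, h1, h2, h3, h4, rfl⟩
    exact lowerbound hc1a hc2a hσ1 hσ2 (h.trans (min_le_left _ _)) (h.trans (min_le_right _ _))
      h1 h2 h3 h4
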